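/- In the ring of formal power series ℚ⟦w⟧, the following identity holds: exp(−w)·(exp(w) − 1)²·(1 − ∑_{n≥0} (B_{n+2}/((n+2)·n!))·w^{n+2}) = w², where B_n denotes the n-th Bernoulli number, defined by w/(e^w − 1) = ∑_{n≥0} B_n·w^n/n!. -/

import Mathlib

open PowerSeries

private lemma deriv_exp_eq : d⁄dX ℚ (exp ℚ) = exp ℚ := by
  ext n
  rw [PowerSeries.coeff_derivative, coeff_exp, coeff_exp]
  simp only [Algebra.algebraMap_self_apply]
  field_simp [Nat.factorial_succ]
  push_cast [Nat.factorial_succ]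
  ring

private lemma deriv_rel :
    d⁄dX ℚ (bernoulliPowerSeries ℚ) * (exp ℚ - 1) + bernoulliPowerSeries ℚ * exp ℚ = 1 := by
  have h := congrArg (d⁄dX ℚ) (bernoulliPowerSeries_mul_exp_sub_one ℚ)
  rw [Derivation.leibniz, PowerSeries.derivative_X, map_sub, deriv_exp_eq,
    Derivation.map_one_eq_zero, sub_zero, smul_eq_mul, smul_eq_mul] at h
  linear_combination h

private lemma sq_exp_eq :
    bernoulliPowerSeries ℚ - X * d⁄dX ℚ (bernoulliPowerSeries ℚ)
      = bernoulliPowerSeries ℚ ^ 2 * exp ℚ := by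
  linear_combination (d⁄dX ℚ (bernoulliPowerSeries ℚ)) * bernoulliPowerSeries_mul_exp_sub_one ℚ
    - bernoulliPowerSeries ℚ * deriv_rel

private lemma coeff_eq :
    (1 : ℚ⟦X⟧) - X ^ 2 * PowerSeries.mk
        (fun n => bernoulli (n + 2) / (((n + 2) * n.factorial : ℕ) : ℚ))
      = bernoulliPowerSeries ℚ - X * d⁄dX ℚ (bernoulliPowerSeries ℚ) := by
  ext n
  rcases n with _ | _ | n
  · simp [bernoulliPowerSeries, coeff_one]
  · simp [bernoulliPowerSeries, coeff_one, coeff_succ_X_mul, PowerSeries.coeff_derivative,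
      bernoulli_one, coeff_X_pow_mul']
  · simp only [show n + 1 + 1 = n + 2 from rfl]
    rw [map_sub, map_sub, coeff_one, coeff_succ_X_mul, PowerSeries.coeff_derivative,
      coeff_X_pow_mul, coeff_mk]
    simp only [bernoulliPowerSeries, coeff_mk, if_neg (by omega : ¬ n + 2 = 0),
      Algebra.algebraMap_self_apply]
    have hf : (((n + 1) + 1).factorial : ℚ) = ((n+2) * (n+1) * n.factorial : ℕ) := by
      push_cast [Nat.factorial_succ]
      ring
    rw [hf]
    have h0 : ((n : ℚ) + 1) ≠ 0 := by positivity
    have h1 : ((n : ℚ) + 2) ≠ 0 := by positivity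
    have h3 : (n.factorial : ℚ) ≠ 0 := by exact_mod_cast n.factorial_ne_zero
    push_cast
    field_simp
    ring

/-- In `ℚ⟦w⟧`:
`exp(−w)·(exp(w) − 1)²·(1 − ∑_{n≥0} (B_{n+2}/((n+2)·n!))·w^{n+2}) = w²`,
where `B_n` is the `n`-th Bernoulli number (generating function `w/(e^w − 1) = ∑ B_n wⁿ/n!`). -/
theorem bernoulli_second_difference_inverse :
    (rescale (-1) (exp ℚ)) * (exp ℚ - 1) ^ 2 *
      (1 - X ^ 2 * PowerSeries.mk
        (fun n => bernoulli (n + 2) / (((n + 2) * n.factorial : ℕ) : ℚ))) = X ^ 2 := by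
  rw [coeff_eq, sq_exp_eq]
  have hneg : exp ℚ * rescale (-1) (exp ℚ) = 1 := exp_mul_exp_neg_eq_one
  linear_combination ((exp ℚ - 1) ^ 2 * bernoulliPowerSeries ℚ ^ 2) * hneg
    + (bernoulliPowerSeries ℚ * (exp ℚ - 1) + X) * bernoulliPowerSeries_mul_exp_sub_one ℚ
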